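/- Let (E → G, ▷) be a crossed module of finite groups, let G act by automorphisms on finite groups X and Y, let f : Y → X be a G-equivariant group homomorphism, and suppose im(∂) ⊆ G acts trivially on both X and Y. Then the map ∂ : Fun(X) ⊗ ℂ[E] → Fun(Y) ⋊ ℂ[G], ξ⊗e ↦ f*ξ ⊗ ∂(e), together with the action (φ⊗g) ▷ (ξ⊗e) := φ(1)·(g▷ξ) ⊗ (g▷e), satisfies the first Peiffer relation: ∂((φ⊗g)▷(ξ⊗e)) = (φ₍₁₎⊗g)·∂(ξ⊗e)·S(φ₍₂₎⊗g). -/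

import Mathlib

open TensorProduct

noncomputable section

/-- The comultiplication of the group Hopf algebra `ℂ[K]`: `Δ(k) = k ⊗ k`. -/
def gaComul (K : Type*) [Group K] :
    MonoidAlgebra ℂ K →ₗ[ℂ] MonoidAlgebra ℂ K ⊗[ℂ] MonoidAlgebra ℂ K :=
  (Finsupp.lsum ℂ fun k => LinearMap.toSpanSingleton ℂ _
    (MonoidAlgebra.single k (1 : ℂ) ⊗ₜ[ℂ] MonoidAlgebra.single k (1 : ℂ))) ∘ₗ
    (MonoidAlgebra.coeffLinearEquiv ℂ).toLinearMap

/-- The counit of the group Hopf algebra `ℂ[K]`: `ε(k) = 1`. -/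
def gaCounit (K : Type*) [Group K] : MonoidAlgebra ℂ K →ₗ[ℂ] ℂ :=
  (Finsupp.lsum ℂ fun _ => (LinearMap.id : ℂ →ₗ[ℂ] ℂ)) ∘ₗ
    (MonoidAlgebra.coeffLinearEquiv ℂ).toLinearMap

/-- The comultiplication of `Fun(Y)`: `Δ(φ)(y ⊗ y') = φ(y y')`, concretely
`Δ(φ) = ∑ₐ δₐ ⊗ φ(a ⬝ ·)`. -/
def funComul (Y : Type*) [Group Y] [Fintype Y] [DecidableEq Y] :
    (Y → ℂ) →ₗ[ℂ] (Y → ℂ) ⊗[ℂ] (Y → ℂ) :=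
  ∑ a : Y,
    (TensorProduct.mk ℂ (Y → ℂ) (Y → ℂ) (Pi.single a (1 : ℂ))) ∘ₗ
      LinearMap.funLeft ℂ ℂ (fun y => a * y)

variable (Y G X E : Type*) [Group Y] [Group G] [Group X] [Group E]
  [Fintype Y] [Fintype G] [Fintype X] [Fintype E] [DecidableEq Y]

/-- The action of `ℂ[G]` on `Fun(Y)`: `(g ▷ ψ)(y) = ψ(g⁻¹ ▷ y)`. -/
def actFunY (ρ : G →* MulAut Y) :
    MonoidAlgebra ℂ G →ₗ[ℂ] (Y → ℂ) →ₗ[ℂ] (Y → ℂ) :=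
  (Finsupp.lsum ℂ fun g => LinearMap.toSpanSingleton ℂ _
    (LinearMap.funLeft ℂ ℂ (fun y => ρ g⁻¹ y))) ∘ₗ
    (MonoidAlgebra.coeffLinearEquiv ℂ).toLinearMap

/-- The multiplication `(φ ⊗ g) ⬝ (ψ ⊗ h) = φ (g ▷ ψ) ⊗ g h` of the crossed product
`Fun(Y) ⋊ ℂ[G]`. -/
def cpMul (ρ : G →* MulAut Y) :
    ((Y → ℂ) ⊗[ℂ] MonoidAlgebra ℂ G) ⊗[ℂ] ((Y → ℂ) ⊗[ℂ] MonoidAlgebra ℂ G) →ₗ[ℂ]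
      (Y → ℂ) ⊗[ℂ] MonoidAlgebra ℂ G :=
  (TensorProduct.map (LinearMap.mul' ℂ (Y → ℂ)) LinearMap.id) ∘ₗ
  (TensorProduct.assoc ℂ (Y → ℂ) (Y → ℂ) (MonoidAlgebra ℂ G)).symm.toLinearMap ∘ₗ
  (TensorProduct.map LinearMap.id
    ((TensorProduct.map (TensorProduct.lift (actFunY Y G ρ))
        (LinearMap.mul' ℂ (MonoidAlgebra ℂ G))) ∘ₗ
      (TensorProduct.tensorTensorTensorComm ℂ (MonoidAlgebra ℂ G) (MonoidAlgebra ℂ G)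
        (Y → ℂ) (MonoidAlgebra ℂ G)).toLinearMap)) ∘ₗ
  (TensorProduct.assoc ℂ (Y → ℂ) (MonoidAlgebra ℂ G ⊗[ℂ] MonoidAlgebra ℂ G)
    ((Y → ℂ) ⊗[ℂ] MonoidAlgebra ℂ G)).toLinearMap ∘ₗ
  (TensorProduct.map (TensorProduct.map LinearMap.id (gaComul G)) LinearMap.id)

/-- The unit `1 ⊗ 1` of `Fun(Y) ⋊ ℂ[G]`. -/
def cpOne : (Y → ℂ) ⊗[ℂ] MonoidAlgebra ℂ G :=
  (1 : Y → ℂ) ⊗ₜ[ℂ] (1 : MonoidAlgebra ℂ G)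

/-- The comultiplication `Δ(φ ⊗ g) = (φ₍₁₎ ⊗ g) ⊗ (φ₍₂₎ ⊗ g)` of `Fun(Y) ⋊ ℂ[G]`. -/
def cpComul :
    (Y → ℂ) ⊗[ℂ] MonoidAlgebra ℂ G →ₗ[ℂ]
      ((Y → ℂ) ⊗[ℂ] MonoidAlgebra ℂ G) ⊗[ℂ] ((Y → ℂ) ⊗[ℂ] MonoidAlgebra ℂ G) :=
  (TensorProduct.tensorTensorTensorComm ℂ (Y → ℂ) (Y → ℂ)
      (MonoidAlgebra ℂ G) (MonoidAlgebra ℂ G)).toLinearMap ∘ₗ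
    TensorProduct.map (funComul Y) (gaComul G)

/-- The counit `ε(φ ⊗ g) = φ(1)` of `Fun(Y) ⋊ ℂ[G]`. -/
def cpCounit : (Y → ℂ) ⊗[ℂ] MonoidAlgebra ℂ G →ₗ[ℂ] ℂ :=
  TensorProduct.lift
    ((LinearMap.proj (1 : Y) : (Y → ℂ) →ₗ[ℂ] ℂ).smulRight (gaCounit G))

/-- The action `(φ ⊗ g) ▷ (ξ ⊗ e) = φ(1) (g ▷ ξ) ⊗ (g ▷ e)` of `Fun(Y) ⋊ ℂ[G]` on
`Fun(X) ⊗ ℂ[E]`. -/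
def gexyAct (ρX : G →* MulAut X) (ρE : G →* MulAut E) :
    (Y → ℂ) ⊗[ℂ] MonoidAlgebra ℂ G →ₗ[ℂ]
      ((X → ℂ) ⊗[ℂ] MonoidAlgebra ℂ E) →ₗ[ℂ] (X → ℂ) ⊗[ℂ] MonoidAlgebra ℂ E :=
  TensorProduct.lift
    ((LinearMap.proj (1 : Y) : (Y → ℂ) →ₗ[ℂ] ℂ).smulRight
      ((Finsupp.lsum ℂ fun g => LinearMap.toSpanSingleton ℂ _
        (TensorProduct.map (LinearMap.funLeft ℂ ℂ (fun x => ρX g⁻¹ x))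
          (MonoidAlgebra.mapDomainLinearMap ℂ ℂ (fun e : E => ρE g e)))) ∘ₗ
        (MonoidAlgebra.coeffLinearEquiv ℂ).toLinearMap))

/-- The antipode `S(φ ⊗ g) = (g⁻¹ ▷ S(φ)) ⊗ g⁻¹` of `Fun(Y) ⋊ ℂ[G]`, where
`(g⁻¹ ▷ S(φ))(y) = φ((g ▷ y)⁻¹)`. -/
def cpAntipode (ρY : G →* MulAut Y) :
    (Y → ℂ) ⊗[ℂ] MonoidAlgebra ℂ G →ₗ[ℂ] (Y → ℂ) ⊗[ℂ] MonoidAlgebra ℂ G :=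
  TensorProduct.lift
    ((LinearMap.lcomp ℂ _ (MonoidAlgebra.coeffLinearEquiv ℂ (M := G) (S := ℂ)).toLinearMap) ∘ₗ
      (Finsupp.lsum ℂ :
        (G → ℂ →ₗ[ℂ] (Y → ℂ) ⊗[ℂ] MonoidAlgebra ℂ G) ≃ₗ[ℂ]
          ((G →₀ ℂ) →ₗ[ℂ] (Y → ℂ) ⊗[ℂ] MonoidAlgebra ℂ G)).toLinearMap ∘ₗ
      LinearMap.pi fun g =>
        (LinearMap.ringLmapEquivSelf ℂ ℂ
            ((Y → ℂ) ⊗[ℂ] MonoidAlgebra ℂ G)).symm.toLinearMap ∘ₗ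
          ((TensorProduct.mk ℂ (Y → ℂ) (MonoidAlgebra ℂ G)).flip
              (MonoidAlgebra.single g⁻¹ (1 : ℂ))) ∘ₗ
          LinearMap.funLeft ℂ ℂ (fun y => (ρY g y)⁻¹))

/-- The boundary `∂(ξ ⊗ e) = f*ξ ⊗ ∂(e)` from `Fun(X) ⊗ ℂ[E]` to `Fun(Y) ⋊ ℂ[G]`. -/
def gexyBdry (f : Y →* X) (d : E →* G) :
    (X → ℂ) ⊗[ℂ] MonoidAlgebra ℂ E →ₗ[ℂ] (Y → ℂ) ⊗[ℂ] MonoidAlgebra ℂ G :=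
  TensorProduct.map (LinearMap.funLeft ℂ ℂ f) (MonoidAlgebra.mapDomainLinearMap ℂ ℂ d)

/-- The "quantum adjoint action" `u ⊗ v ↦ u₍₁₎ ⬝ v ⬝ S(u₍₂₎)` of `Fun(Y) ⋊ ℂ[G]` on
itself (all products taken in the crossed product). -/
def cpAdjoint (ρY : G →* MulAut Y) :
    ((Y → ℂ) ⊗[ℂ] MonoidAlgebra ℂ G) ⊗[ℂ] ((Y → ℂ) ⊗[ℂ] MonoidAlgebra ℂ G) →ₗ[ℂ]
      (Y → ℂ) ⊗[ℂ] MonoidAlgebra ℂ G :=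
  cpMul Y G ρY ∘ₗ
  (TensorProduct.map LinearMap.id (cpMul Y G ρY)) ∘ₗ
  (TensorProduct.map LinearMap.id
    (TensorProduct.comm ℂ ((Y → ℂ) ⊗[ℂ] MonoidAlgebra ℂ G)
      ((Y → ℂ) ⊗[ℂ] MonoidAlgebra ℂ G)).toLinearMap) ∘ₗ
  (TensorProduct.assoc ℂ ((Y → ℂ) ⊗[ℂ] MonoidAlgebra ℂ G)
    ((Y → ℂ) ⊗[ℂ] MonoidAlgebra ℂ G) ((Y → ℂ) ⊗[ℂ] MonoidAlgebra ℂ G)).toLinearMap ∘ₗ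
  (TensorProduct.map (TensorProduct.map LinearMap.id (cpAntipode Y G ρY))
    LinearMap.id) ∘ₗ
  (TensorProduct.map (cpComul Y G) LinearMap.id)


set_option maxHeartbeats 1000000 in
set_option synthInstance.maxHeartbeats 400000 in
lemma cpMul_tmul (ρ : G →* MulAut Y) (φ ψ : Y → ℂ) (g h : G) :
    cpMul Y G ρ ((φ ⊗ₜ[ℂ] MonoidAlgebra.single g (1:ℂ)) ⊗ₜ[ℂ]
        (ψ ⊗ₜ[ℂ] MonoidAlgebra.single h (1:ℂ))) =
      (φ * fun y => ψ ((ρ g⁻¹) y)) ⊗ₜ[ℂ] MonoidAlgebra.single (g * h) (1:ℂ) := by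
  simp only [cpMul, actFunY, gaComul, LinearMap.coe_comp, Function.comp_apply,
    TensorProduct.map_tmul, LinearMap.id_coe, id_eq, LinearEquiv.coe_coe]
  erw [Finsupp.lsum_single]
  simp only [LinearMap.toSpanSingleton_apply, one_smul, TensorProduct.assoc_tmul,
    TensorProduct.map_tmul, TensorProduct.tensorTensorTensorComm_tmul,
    TensorProduct.lift.tmul, LinearMap.id_coe, id_eq, LinearMap.mul'_apply,
    MonoidAlgebra.single_mul_single, one_mul, TensorProduct.assoc_symm_tmul,
    LinearMap.coe_comp, Function.comp_apply, LinearEquiv.coe_coe,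
    TensorProduct.tensorTensorTensorComm_tmul]
  erw [Finsupp.lsum_single]
  simp only [LinearMap.toSpanSingleton_apply, one_smul, TensorProduct.map_tmul,
    LinearMap.id_coe, id_eq, LinearMap.mul'_apply, MonoidAlgebra.single_mul_single,
    one_mul, TensorProduct.assoc_symm_tmul, LinearEquiv.coe_coe]
  rfl

set_option maxHeartbeats 1000000 in
set_option synthInstance.maxHeartbeats 400000 in
lemma cpAntipode_tmul (ρ : G →* MulAut Y) (φ : Y → ℂ) (g : G) :
    cpAntipode Y G ρ (φ ⊗ₜ[ℂ] MonoidAlgebra.single g (1:ℂ)) =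
      (fun y => φ (((ρ g) y)⁻¹)) ⊗ₜ[ℂ] MonoidAlgebra.single g⁻¹ (1:ℂ) := by
  simp only [cpAntipode, TensorProduct.lift.tmul, LinearMap.coe_comp,
    Function.comp_apply, LinearEquiv.coe_coe]
  erw [Finsupp.lsum_single (S := ℂ)]
  simp only [LinearMap.pi_apply, LinearMap.coe_comp, Function.comp_apply,
    LinearEquiv.coe_coe, LinearMap.ringLmapEquivSelf_symm_apply, one_smul,
    LinearMap.flip_apply, TensorProduct.mk_apply, LinearMap.smulRight_apply,
    Module.End.one_apply]
  rfl

set_option maxHeartbeats 1000000 in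
set_option synthInstance.maxHeartbeats 400000 in
lemma cpComul_tmul (φ : Y → ℂ) (g : G) :
    cpComul Y G (φ ⊗ₜ[ℂ] MonoidAlgebra.single g (1:ℂ)) =
      ∑ a : Y, (Pi.single a (1:ℂ) ⊗ₜ[ℂ] MonoidAlgebra.single g (1:ℂ)) ⊗ₜ[ℂ]
        ((fun y => φ (a * y)) ⊗ₜ[ℂ] MonoidAlgebra.single g (1:ℂ)) := by
  simp only [cpComul, funComul, gaComul, LinearMap.coe_comp, Function.comp_apply,
    TensorProduct.map_tmul, LinearEquiv.coe_coe]
  erw [Finsupp.lsum_single]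
  simp only [LinearMap.toSpanSingleton_apply, one_smul, LinearMap.sum_apply,
    LinearMap.coe_comp, Function.comp_apply, TensorProduct.mk_apply,
    TensorProduct.sum_tmul]
  rw [map_sum]
  refine Finset.sum_congr rfl fun a _ => ?_
  simp only [TensorProduct.tensorTensorTensorComm_tmul]
  rfl

set_option maxHeartbeats 1000000 in
set_option synthInstance.maxHeartbeats 400000 in
/-- Given a crossed module of finite groups `(E → G, ▷)`, actions of
`G` by automorphisms on finite groups `X` and `Y`, a `G`-equivariant homomorphism
`f : Y →* X`, and assuming `im(∂)` acts trivially on `X` and `Y`, the boundary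
`∂(ξ ⊗ e) = f*ξ ⊗ ∂(e)` and the action `(φ ⊗ g) ▷ (ξ ⊗ e) = φ(1) (g ▷ ξ) ⊗ (g ▷ e)`
satisfy the first Peiffer relation
`∂((φ ⊗ g) ▷ (ξ ⊗ e)) = (φ₍₁₎ ⊗ g) ⬝ ∂(ξ ⊗ e) ⬝ S(φ₍₂₎ ⊗ g)`. -/
theorem stmt11 (d : E →* G) (ρGE : G →* MulAut E)
    (ρY : G →* MulAut Y) (ρX : G →* MulAut X) (f : Y →* X)
    (grp_peiffer1 : ∀ (g : G) (e : E), d (ρGE g e) = g * d e * g⁻¹)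
    (grp_peiffer2 : ∀ e e' : E, ρGE (d e) e' = e * e' * e⁻¹)
    (hequiv : ∀ (g : G) (y : Y), f (ρY g y) = ρX g (f y))
    (htrivX : ∀ (e : E) (x : X), ρX (d e) x = x)
    (htrivY : ∀ (e : E) (y : Y), ρY (d e) y = y) :
    gexyBdry Y G X E f d ∘ₗ TensorProduct.lift (gexyAct Y G X E ρX ρGE) =
      cpAdjoint Y G ρY ∘ₗ
        TensorProduct.map LinearMap.id (gexyBdry Y G X E f d) := by
  have htrivY' : ∀ (e : E) (y : Y), (ρY (d e)⁻¹) y = y := fun e y => by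
    rw [← map_inv d]; exact htrivY _ y
  have hGY : ∀ (g : G) (y : Y), (ρY g) ((ρY g⁻¹) y) = y := fun g y => by
    rw [← MulAut.mul_apply, ← map_mul, mul_inv_cancel, map_one, MulAut.one_apply]
  ext φ g ξ e
  simp only [LinearMap.coe_comp, Function.comp_apply,
    TensorProduct.AlgebraTensorModule.curry_apply, TensorProduct.curry_apply,
    LinearMap.coe_restrictScalars, MonoidAlgebra.lsingle_apply, LinearMap.coe_single,
    TensorProduct.lift.tmul, TensorProduct.map_tmul, LinearMap.id_coe, id_eq]
  simp only [gexyAct, TensorProduct.lift.tmul, LinearMap.smulRight_apply,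
    LinearMap.proj_apply, LinearMap.smul_apply]
  erw [Finsupp.lsum_single (S := ℂ)]
  simp only [LinearMap.smul_apply, LinearMap.toSpanSingleton_apply, one_smul,
    TensorProduct.map_tmul, Finsupp.lmapDomain_apply, Finsupp.mapDomain_single,
    map_smul, gexyBdry, LinearMap.id_coe, id_eq]
  simp only [cpAdjoint, LinearMap.coe_comp, Function.comp_apply, TensorProduct.map_tmul,
    LinearMap.id_coe, id_eq, cpComul_tmul, TensorProduct.sum_tmul, map_sum,
    cpAntipode_tmul, LinearEquiv.coe_coe, TensorProduct.assoc_tmul,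
    TensorProduct.comm_tmul, cpMul_tmul]
  simp only [MonoidAlgebra.mapDomainLinearMap_single]
  simp only [cpMul_tmul]
  rw [grp_peiffer1, mul_assoc, TensorProduct.smul_tmul', ← TensorProduct.sum_tmul]
  congr 1
  funext y
  simp only [Pi.smul_apply, smul_eq_mul, LinearMap.funLeft_apply, Finset.sum_apply,
    Pi.mul_apply, htrivY', hGY, hequiv]
  rw [Finset.sum_eq_single y]
  · rw [mul_inv_cancel, Pi.single_eq_same]
    ring
  · intro b _ hb
    simp [Pi.single_eq_of_ne (Ne.symm hb)]
  · intro h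
    exact absurd (Finset.mem_univ y) h

end
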